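/- Upper bound for integer power connectives: Fix an integer d ≥ 1 and ε ∈ (0,1), and let H be a real inner product space. Suppose x_1,…,x_n and y_1,…,y_n are vectors in H with ‖x_i‖ ≤ 1 and ‖y_i‖ ≤ 1, such that ⟪x_i,y_j⟫^d − ⟪x_j,y_i⟫^d ≥ ε for all 1 ≤ i < j ≤ n. Then log n ≤ π/ε + 1. -/

import Mathlib

open RealInnerProductSpace Real


/-- key integral: `∫₀^{2π} (π-t) sin(at) dt = 2π/a` for nonzero `a` with period dividing `2π`. -/
lemma ipub_integral_sin (a : ℝ) (ha : a ≠ 0) (hs : Real.sin (a*(2*π)) = 0)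
    (hc : Real.cos (a*(2*π)) = 1) :
    ∫ t in (0:ℝ)..(2*π), (π - t) * Real.sin (a*t) = 2*π/a := by
  have key : ∀ t ∈ Set.uIcc (0:ℝ) (2*π), HasDerivAt
      (fun t => (t - π) * Real.cos (a*t) / a - Real.sin (a*t)/a^2)
      ((π - t) * Real.sin (a*t)) t := by
    intro t _
    have h1 : HasDerivAt (fun t : ℝ => a*t) a t := by
      simpa using (hasDerivAt_id t).const_mul a
    have hc1 : HasDerivAt (fun t => Real.cos (a*t)) (-Real.sin (a*t) * a) t :=
      (Real.hasDerivAt_cos (a*t)).comp t h1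
    have hs1 : HasDerivAt (fun t => Real.sin (a*t)) (Real.cos (a*t) * a) t :=
      (Real.hasDerivAt_sin (a*t)).comp t h1
    have h2 : HasDerivAt (fun t : ℝ => (t - π) * Real.cos (a*t))
        (1 * Real.cos (a*t) + (t - π) * (-Real.sin (a*t) * a)) t :=
      ((hasDerivAt_id t).sub_const π).mul hc1
    have := (h2.div_const a).sub (hs1.div_const (a^2))
    refine this.congr_deriv ?_
    field_simp
    ring
  rw [intervalIntegral.integral_eq_sub_of_hasDerivAt key (by
    apply Continuous.intervalIntegrable; continuity)]
  simp only [hs, hc]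
  simp only [mul_zero, Real.cos_zero, Real.sin_zero]
  field_simp
  ring

/-- `∫₀^{2π} cos(at) dt = 0` for nonzero `a` with `sin(2πa)=0`. -/
lemma ipub_integral_cos (a : ℝ) (ha : a ≠ 0) (hs : Real.sin (a*(2*π)) = 0) :
    ∫ t in (0:ℝ)..(2*π), Real.cos (a*t) = 0 := by
  have key : ∀ t ∈ Set.uIcc (0:ℝ) (2*π), HasDerivAt
      (fun t => Real.sin (a*t)/a) (Real.cos (a*t)) t := by
    intro t _
    have h1 : HasDerivAt (fun t : ℝ => a*t) a t := by
      simpa using (hasDerivAt_id t).const_mul a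
    have hs1 : HasDerivAt (fun t => Real.sin (a*t)) (Real.cos (a*t) * a) t :=
      (Real.hasDerivAt_sin (a*t)).comp t h1
    have := hs1.div_const a
    refine this.congr_deriv ?_
    field_simp
  rw [intervalIntegral.integral_eq_sub_of_hasDerivAt key (by
    apply Continuous.intervalIntegrable; continuity)]
  simp [hs]

/-- The integral for integer frequencies. -/
lemma ipub_integral_sin_int (k : ℤ) :
    ∫ t in (0:ℝ)..(2*π), (π - t) * Real.sin ((k:ℝ)*t)
      = if k = 0 then 0 else 2*π/(k:ℝ) := by
  by_cases hk : k = 0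
  · simp [hk]
  · rw [if_neg hk]
    apply ipub_integral_sin _ (by exact_mod_cast hk)
    · have h2 : (k:ℝ)*(2*π) = ((2*k : ℤ):ℝ) * π := by push_cast; ring
      rw [h2, Real.sin_int_mul_pi]
    · have h2 : (k:ℝ)*(2*π) = ((k : ℤ):ℝ) * (2*π) := by norm_num
      rw [h2, Real.cos_int_mul_two_pi]

lemma ipub_integral_cos_int (k : ℤ) :
    ∫ t in (0:ℝ)..(2*π), Real.cos ((k:ℝ)*t)
      = if k = 0 then 2*π else 0 := by
  by_cases hk : k = 0
  · simp [hk]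
  · rw [if_neg hk]
    apply ipub_integral_cos _ (by exact_mod_cast hk)
    have h2 : (k:ℝ)*(2*π) = ((2*k : ℤ):ℝ) * π := by push_cast; ring
    rw [h2, Real.sin_int_mul_pi]

/-- harmonic sum dominates log -/
lemma ipub_log_le_harm : ∀ j : ℕ, Real.log (j+1) ≤ ∑ i ∈ Finset.range j, 1/((i:ℝ)+1) := by
  intro j
  induction j with
  | zero => simp
  | succ j ih =>
    rw [Finset.sum_range_succ]
    have h1 : Real.log ((j:ℝ)+1+1) - Real.log ((j:ℝ)+1) ≤ 1/((j:ℝ)+1) := by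
      rw [← Real.log_div (by positivity) (by positivity)]
      have := Real.log_le_sub_one_of_pos (x := ((j:ℝ)+1+1)/((j:ℝ)+1)) (by positivity)
      calc Real.log (((j:ℝ)+1+1)/((j:ℝ)+1)) ≤ ((j:ℝ)+1+1)/((j:ℝ)+1) - 1 := this
        _ = 1/((j:ℝ)+1) := by field_simp; ring
    push_cast
    push_cast at ih
    linarith

/-- sum of logs dominates `n log n - n` -/
lemma ipub_sum_log : ∀ n : ℕ, (n:ℝ) * Real.log n - n ≤ ∑ k ∈ Finset.range n, Real.log (k+1) := by
  intro n
  induction n with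
  | zero => simp
  | succ n ih =>
    rw [Finset.sum_range_succ]
    rcases Nat.eq_zero_or_pos n with h0 | h0
    · subst h0; simp
    have hn : (0:ℝ) < n := by exact_mod_cast h0
    have h1 : Real.log ((n:ℝ)+1) - Real.log n ≤ 1/(n:ℝ) := by
      rw [← Real.log_div (by positivity) (by positivity)]
      have := Real.log_le_sub_one_of_pos (x := ((n:ℝ)+1)/(n:ℝ)) (by positivity)
      calc Real.log (((n:ℝ)+1)/(n:ℝ)) ≤ ((n:ℝ)+1)/(n:ℝ) - 1 := this
        _ = 1/(n:ℝ) := by field_simp; ring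
    have h2 : (n:ℝ) * (Real.log ((n:ℝ)+1) - Real.log n) ≤ 1 := by
      calc (n:ℝ) * (Real.log ((n:ℝ)+1) - Real.log n) ≤ (n:ℝ) * (1/(n:ℝ)) :=
        mul_le_mul_of_nonneg_left h1 (le_of_lt hn)
        _ = 1 := by field_simp
    push_cast
    push_cast at ih
    nlinarith [ih]

section Hilbert
variable {E : Type*} [NormedAddCommGroup E] [InnerProductSpace ℝ E]

set_option maxHeartbeats 1000000 in
/-- Hilbert-type inequality for inner products of unit-ball vectors. -/
lemma ipub_hilbert {n : ℕ} (X Y : Fin n → E)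
    (hX : ∀ i, ‖X i‖ ≤ 1) (hY : ∀ i, ‖Y i‖ ≤ 1) :
    ∑ m : Fin n, ∑ k : Fin n, ⟪X m, Y k⟫ *
      (if m = k then 0 else 2*π/((k:ℝ) - (m:ℝ))) ≤ 2*π^2*n := by
  classical
  set u : ℝ → E := fun t => ∑ m : Fin n, Real.cos ((m:ℝ)*t) • X m with hu_def
  set v : ℝ → E := fun t => ∑ m : Fin n, Real.sin ((m:ℝ)*t) • X m with hv_def
  set p : ℝ → E := fun t => ∑ k : Fin n, Real.cos ((k:ℝ)*t) • Y k with hp_def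
  set q : ℝ → E := fun t => ∑ k : Fin n, Real.sin ((k:ℝ)*t) • Y k with hq_def
  have hcont_cos : ∀ m : Fin n, Continuous fun t : ℝ => Real.cos ((m:ℝ)*t) :=
    fun m => Real.continuous_cos.comp (continuous_const.mul continuous_id)
  have hcont_sin : ∀ m : Fin n, Continuous fun t : ℝ => Real.sin ((m:ℝ)*t) :=
    fun m => Real.continuous_sin.comp (continuous_const.mul continuous_id)
  have hcu : Continuous u := continuous_finset_sum _ fun m _ => (hcont_cos m).smul continuous_const
  have hcv : Continuous v := continuous_finset_sum _ fun m _ => (hcont_sin m).smul continuous_const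
  have hcp : Continuous p := continuous_finset_sum _ fun m _ => (hcont_cos m).smul continuous_const
  have hcq : Continuous q := continuous_finset_sum _ fun m _ => (hcont_sin m).smul continuous_const
  set F : ℝ → ℝ := fun t => ⟪u t, q t⟫ - ⟪v t, p t⟫ with hF_def
  set G : ℝ → ℝ := fun t => ‖u t‖^2 + ‖v t‖^2 + ‖p t‖^2 + ‖q t‖^2 with hG_def
  have hcF : Continuous F := (hcu.inner hcq).sub (hcv.inner hcp)
  have hcG : Continuous G :=
    (((hcu.norm.pow 2).add (hcv.norm.pow 2)).add (hcp.norm.pow 2)).add (hcq.norm.pow 2)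
  -- pointwise expansion of F
  have hF : ∀ t : ℝ, F t = ∑ m : Fin n, ∑ k : Fin n,
      ⟪X m, Y k⟫ * Real.sin (((k:ℝ) - (m:ℝ))*t) := by
    intro t
    have h1 : ⟪u t, q t⟫ = ∑ m : Fin n, ∑ k : Fin n,
        (Real.cos ((m:ℝ)*t) * Real.sin ((k:ℝ)*t)) * ⟪X m, Y k⟫ := by
      simp only [hu_def, hq_def, sum_inner, inner_sum, real_inner_smul_left,
        real_inner_smul_right, Finset.mul_sum]
      rw [Finset.sum_comm]
      apply Finset.sum_congr rfl; intro m _; apply Finset.sum_congr rfl; intro k _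
      rw [real_inner_comm]; ring
    have h2 : ⟪v t, p t⟫ = ∑ m : Fin n, ∑ k : Fin n,
        (Real.sin ((m:ℝ)*t) * Real.cos ((k:ℝ)*t)) * ⟪X m, Y k⟫ := by
      simp only [hv_def, hp_def, sum_inner, inner_sum, real_inner_smul_left,
        real_inner_smul_right, Finset.mul_sum]
      rw [Finset.sum_comm]
      apply Finset.sum_congr rfl; intro m _; apply Finset.sum_congr rfl; intro k _
      rw [real_inner_comm]; ring
    simp only [hF_def, h1, h2, ← Finset.sum_sub_distrib]
    apply Finset.sum_congr rfl; intro m _; apply Finset.sum_congr rfl; intro k _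
    rw [sub_mul, Real.sin_sub]
    ring
  -- the LHS equals an integral
  have key : ∑ m : Fin n, ∑ k : Fin n, ⟪X m, Y k⟫ *
      (if m = k then (0:ℝ) else 2*π/((k:ℝ) - (m:ℝ)))
      = ∫ t in (0:ℝ)..(2*π), (π - t) * F t := by
    have hterm : ∀ m k : Fin n, (if m = k then (0:ℝ) else 2*π/((k:ℝ) - (m:ℝ)))
        = ∫ t in (0:ℝ)..(2*π), (π - t) * Real.sin (((k:ℝ) - (m:ℝ))*t) := by
      intro m k
      have hcast : (k:ℝ) - (m:ℝ) = (((k:ℤ) - (m:ℤ) : ℤ) : ℝ) := by push_cast; ring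
      rw [hcast, ipub_integral_sin_int ((k:ℤ) - (m:ℤ))]
      by_cases h : m = k
      · subst h; simp
      · have : (k:ℤ) - (m:ℤ) ≠ 0 := by
          intro hc
          apply h
          have : (m:ℤ) = (k:ℤ) := by omega
          exact Fin.ext (by exact_mod_cast this)
        rw [if_neg h, if_neg this]

    have hptF : ∀ t : ℝ, (π - t) * F t = ∑ m : Fin n, ∑ k : Fin n,
        ⟪X m, Y k⟫ * ((π - t) * Real.sin (((k:ℝ) - (m:ℝ))*t)) := by
      intro t
      rw [hF t, Finset.mul_sum]
      apply Finset.sum_congr rfl; intro m _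
      rw [Finset.mul_sum]
      apply Finset.sum_congr rfl; intro k _; ring
    rw [intervalIntegral.integral_congr (g := fun t => ∑ m : Fin n, ∑ k : Fin n,
        ⟪X m, Y k⟫ * ((π - t) * Real.sin (((k:ℝ) - (m:ℝ))*t))) (fun t _ => hptF t)]
    rw [intervalIntegral.integral_finset_sum]
    · apply Finset.sum_congr rfl; intro m _
      rw [intervalIntegral.integral_finset_sum]
      · apply Finset.sum_congr rfl; intro k _
        rw [intervalIntegral.integral_const_mul, hterm m k]
      · intro k _
        apply Continuous.intervalIntegrable
        exact continuous_const.mul ((continuous_const.sub continuous_id).mul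
          (Real.continuous_sin.comp (continuous_const.mul continuous_id)))
    · intro m _
      apply Continuous.intervalIntegrable
      apply continuous_finset_sum
      intro k _
      exact continuous_const.mul ((continuous_const.sub continuous_id).mul
        (Real.continuous_sin.comp (continuous_const.mul continuous_id)))
  -- orthogonality integrals
  have orthX : ∫ t in (0:ℝ)..(2*π), (‖u t‖^2 + ‖v t‖^2)
      = 2*π * ∑ m : Fin n, ⟪X m, X m⟫ := by
    have hpt : ∀ t : ℝ, ‖u t‖^2 + ‖v t‖^2 = ∑ m : Fin n, ∑ m' : Fin n,
        ⟪X m, X m'⟫ * Real.cos (((m:ℝ) - (m':ℝ))*t) := by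
      intro t
      have h1 : ‖u t‖^2 = ∑ m : Fin n, ∑ m' : Fin n,
          (Real.cos ((m:ℝ)*t) * Real.cos ((m':ℝ)*t)) * ⟪X m, X m'⟫ := by
        rw [← real_inner_self_eq_norm_sq]
        simp only [hu_def, sum_inner, inner_sum, real_inner_smul_left, real_inner_smul_right,
          Finset.mul_sum]
        rw [Finset.sum_comm]
        apply Finset.sum_congr rfl; intro m _; apply Finset.sum_congr rfl; intro k _
        rw [real_inner_comm]; ring
      have h2 : ‖v t‖^2 = ∑ m : Fin n, ∑ m' : Fin n,
          (Real.sin ((m:ℝ)*t) * Real.sin ((m':ℝ)*t)) * ⟪X m, X m'⟫ := by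
        rw [← real_inner_self_eq_norm_sq]
        simp only [hv_def, sum_inner, inner_sum, real_inner_smul_left, real_inner_smul_right,
          Finset.mul_sum]
        rw [Finset.sum_comm]
        apply Finset.sum_congr rfl; intro m _; apply Finset.sum_congr rfl; intro k _
        rw [real_inner_comm]; ring
      rw [h1, h2, ← Finset.sum_add_distrib]
      apply Finset.sum_congr rfl; intro m _
      rw [← Finset.sum_add_distrib]
      apply Finset.sum_congr rfl; intro m' _
      rw [sub_mul, Real.cos_sub]
      ring
    rw [intervalIntegral.integral_congr (g := fun t => ∑ m : Fin n, ∑ m' : Fin n,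
        ⟪X m, X m'⟫ * Real.cos (((m:ℝ) - (m':ℝ))*t)) (fun t _ => hpt t)]
    rw [intervalIntegral.integral_finset_sum (fun m _ => by
      apply Continuous.intervalIntegrable
      apply continuous_finset_sum
      intro k _
      exact continuous_const.mul (Real.continuous_cos.comp (continuous_const.mul continuous_id)))]
    rw [Finset.mul_sum]
    apply Finset.sum_congr rfl; intro m _
    rw [intervalIntegral.integral_finset_sum (fun k _ => by
      apply Continuous.intervalIntegrable
      exact continuous_const.mul (Real.continuous_cos.comp (continuous_const.mul continuous_id)))]
    have hterm : ∀ m' : Fin n, ∫ t in (0:ℝ)..(2*π), ⟪X m, X m'⟫ * Real.cos (((m:ℝ) - (m':ℝ))*t)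
        = if m = m' then ⟪X m, X m'⟫ * (2*π) else 0 := by
      intro m'
      rw [intervalIntegral.integral_const_mul]
      have hcast : (m:ℝ) - (m':ℝ) = (((m:ℤ) - (m':ℤ) : ℤ) : ℝ) := by push_cast; ring
      rw [hcast, ipub_integral_cos_int ((m:ℤ) - (m':ℤ))]
      by_cases h : m = m'
      · subst h; simp
      · have h2 : (m:ℤ) - (m':ℤ) ≠ 0 := by
          intro hc
          apply h
          have : (m:ℤ) = (m':ℤ) := by omega
          exact Fin.ext (by exact_mod_cast this)
        rw [if_neg h, if_neg h2, mul_zero]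
    rw [Finset.sum_congr rfl (fun m' _ => hterm m'), Finset.sum_ite_eq Finset.univ m
      (fun m' => ⟪X m, X m'⟫ * (2*π))]
    simp [mul_comm]
  have orthY : ∫ t in (0:ℝ)..(2*π), (‖p t‖^2 + ‖q t‖^2)
      = 2*π * ∑ k : Fin n, ⟪Y k, Y k⟫ := by
    have hpt : ∀ t : ℝ, ‖p t‖^2 + ‖q t‖^2 = ∑ m : Fin n, ∑ m' : Fin n,
        ⟪Y m, Y m'⟫ * Real.cos (((m:ℝ) - (m':ℝ))*t) := by
      intro t
      have h1 : ‖p t‖^2 = ∑ m : Fin n, ∑ m' : Fin n,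
          (Real.cos ((m:ℝ)*t) * Real.cos ((m':ℝ)*t)) * ⟪Y m, Y m'⟫ := by
        rw [← real_inner_self_eq_norm_sq]
        simp only [hp_def, sum_inner, inner_sum, real_inner_smul_left, real_inner_smul_right,
          Finset.mul_sum]
        rw [Finset.sum_comm]
        apply Finset.sum_congr rfl; intro m _; apply Finset.sum_congr rfl; intro k _
        rw [real_inner_comm]; ring
      have h2 : ‖q t‖^2 = ∑ m : Fin n, ∑ m' : Fin n,
          (Real.sin ((m:ℝ)*t) * Real.sin ((m':ℝ)*t)) * ⟪Y m, Y m'⟫ := by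
        rw [← real_inner_self_eq_norm_sq]
        simp only [hq_def, sum_inner, inner_sum, real_inner_smul_left, real_inner_smul_right,
          Finset.mul_sum]
        rw [Finset.sum_comm]
        apply Finset.sum_congr rfl; intro m _; apply Finset.sum_congr rfl; intro k _
        rw [real_inner_comm]; ring
      rw [h1, h2, ← Finset.sum_add_distrib]
      apply Finset.sum_congr rfl; intro m _
      rw [← Finset.sum_add_distrib]
      apply Finset.sum_congr rfl; intro m' _
      rw [sub_mul, Real.cos_sub]
      ring
    rw [intervalIntegral.integral_congr (g := fun t => ∑ m : Fin n, ∑ m' : Fin n,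
        ⟪Y m, Y m'⟫ * Real.cos (((m:ℝ) - (m':ℝ))*t)) (fun t _ => hpt t)]
    rw [intervalIntegral.integral_finset_sum (fun m _ => by
      apply Continuous.intervalIntegrable
      apply continuous_finset_sum
      intro k _
      exact continuous_const.mul (Real.continuous_cos.comp (continuous_const.mul continuous_id)))]
    rw [Finset.mul_sum]
    apply Finset.sum_congr rfl; intro m _
    rw [intervalIntegral.integral_finset_sum (fun k _ => by
      apply Continuous.intervalIntegrable
      exact continuous_const.mul (Real.continuous_cos.comp (continuous_const.mul continuous_id)))]
    have hterm : ∀ m' : Fin n, ∫ t in (0:ℝ)..(2*π), ⟪Y m, Y m'⟫ * Real.cos (((m:ℝ) - (m':ℝ))*t)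
        = if m = m' then ⟪Y m, Y m'⟫ * (2*π) else 0 := by
      intro m'
      rw [intervalIntegral.integral_const_mul]
      have hcast : (m:ℝ) - (m':ℝ) = (((m:ℤ) - (m':ℤ) : ℤ) : ℝ) := by push_cast; ring
      rw [hcast, ipub_integral_cos_int ((m:ℤ) - (m':ℤ))]
      by_cases h : m = m'
      · subst h; simp
      · have h2 : (m:ℤ) - (m':ℤ) ≠ 0 := by
          intro hc
          apply h
          have : (m:ℤ) = (m':ℤ) := by omega
          exact Fin.ext (by exact_mod_cast this)
        rw [if_neg h, if_neg h2, mul_zero]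
    rw [Finset.sum_congr rfl (fun m' _ => hterm m'), Finset.sum_ite_eq Finset.univ m
      (fun m' => ⟪Y m, Y m'⟫ * (2*π))]
    simp [mul_comm]
  -- pointwise bound
  have habs : ∀ t ∈ Set.Icc (0:ℝ) (2*π), (π - t) * F t ≤ (π/2) * G t := by
    intro t ht
    have h1 : |⟪u t, q t⟫| ≤ ‖u t‖ * ‖q t‖ := abs_real_inner_le_norm _ _
    have h2 : |⟪v t, p t⟫| ≤ ‖v t‖ * ‖p t‖ := abs_real_inner_le_norm _ _
    have h3 : |π - t| ≤ π := by
      have := Real.pi_pos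
      rw [abs_le]; constructor <;> [linarith [ht.2]; linarith [ht.1]]
    have h4 : (π - t) * F t ≤ |π - t| * |F t| :=
      (le_abs_self _).trans (le_of_eq (abs_mul _ _))
    have h5 : |F t| ≤ ‖u t‖ * ‖q t‖ + ‖v t‖ * ‖p t‖ := by
      have : |F t| ≤ |⟪u t, q t⟫| + |⟪v t, p t⟫| := by
        simp only [hF_def]
        rw [sub_eq_add_neg]
        exact (abs_add_le _ _).trans (by rw [abs_neg])
      exact this.trans (add_le_add h1 h2)
    have h6 : |π - t| * |F t| ≤ π * (‖u t‖ * ‖q t‖ + ‖v t‖ * ‖p t‖) :=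
      mul_le_mul h3 h5 (abs_nonneg _) Real.pi_pos.le
    have h7 : 2 * (‖u t‖ * ‖q t‖ + ‖v t‖ * ‖p t‖) ≤ G t := by
      simp only [hG_def]
      nlinarith [sq_nonneg (‖u t‖ - ‖q t‖), sq_nonneg (‖v t‖ - ‖p t‖)]
    have h8 := mul_le_mul_of_nonneg_left h7 (by positivity : (0:ℝ) ≤ π/2)
    calc (π - t) * F t ≤ |π - t| * |F t| := h4
      _ ≤ π * (‖u t‖ * ‖q t‖ + ‖v t‖ * ‖p t‖) := h6
      _ = π/2 * (2 * (‖u t‖ * ‖q t‖ + ‖v t‖ * ‖p t‖)) := by ring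
      _ ≤ π/2 * G t := h8
  have int1 : IntervalIntegrable (fun t => (π - t) * F t) MeasureTheory.volume 0 (2*π) :=
    ((continuous_const.sub continuous_id).mul hcF).intervalIntegrable _ _
  have int2 : IntervalIntegrable (fun t => (π/2) * G t) MeasureTheory.volume 0 (2*π) :=
    (continuous_const.mul hcG).intervalIntegrable _ _
  have hle : (∫ t in (0:ℝ)..(2*π), (π - t) * F t) ≤ ∫ t in (0:ℝ)..(2*π), (π/2) * G t :=
    intervalIntegral.integral_mono_on (by positivity) int1 int2 habs
  have hGval : (∫ t in (0:ℝ)..(2*π), (π/2) * G t)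
      = (π/2) * (2*π * ∑ m : Fin n, ⟪X m, X m⟫ + 2*π * ∑ k : Fin n, ⟪Y k, Y k⟫) := by
    rw [intervalIntegral.integral_const_mul]
    congr 1
    have hsplit : ∀ t : ℝ, G t = (‖u t‖^2 + ‖v t‖^2) + (‖p t‖^2 + ‖q t‖^2) := by
      intro t; simp only [hG_def]; ring
    rw [intervalIntegral.integral_congr (g := fun t => (‖u t‖^2 + ‖v t‖^2) + (‖p t‖^2 + ‖q t‖^2))
      (fun t _ => hsplit t)]
    rw [intervalIntegral.integral_add
      (Continuous.intervalIntegrable (u := fun t => ‖u t‖^2 + ‖v t‖^2) ((hcu.norm.pow 2).add (hcv.norm.pow 2)) _ _)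
      (Continuous.intervalIntegrable (u := fun t => ‖p t‖^2 + ‖q t‖^2) ((hcp.norm.pow 2).add (hcq.norm.pow 2)) _ _), orthX, orthY]
  have hXsum : ∑ m : Fin n, ⟪X m, X m⟫ ≤ (n:ℝ) := by
    calc ∑ m : Fin n, ⟪X m, X m⟫ ≤ ∑ _m : Fin n, (1:ℝ) := by
          apply Finset.sum_le_sum
          intro m _
          rw [real_inner_self_eq_norm_sq]
          exact pow_le_one₀ (norm_nonneg _) (hX m)
      _ = n := by simp
  have hYsum : ∑ k : Fin n, ⟪Y k, Y k⟫ ≤ (n:ℝ) := by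
    calc ∑ k : Fin n, ⟪Y k, Y k⟫ ≤ ∑ _k : Fin n, (1:ℝ) := by
          apply Finset.sum_le_sum
          intro k _
          rw [real_inner_self_eq_norm_sq]
          exact pow_le_one₀ (norm_nonneg _) (hY k)
      _ = n := by simp
  rw [key]
  calc (∫ t in (0:ℝ)..(2*π), (π - t) * F t)
      ≤ (π/2) * (2*π * ∑ m : Fin n, ⟪X m, X m⟫ + 2*π * ∑ k : Fin n, ⟪Y k, Y k⟫) := by
        rw [← hGval]; exact hle
    _ ≤ 2*π^2*n := by nlinarith [Real.pi_pos, hXsum, hYsum]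

end Hilbert

set_option maxHeartbeats 1000000 in
lemma ipub_main {E : Type*} [NormedAddCommGroup E] [InnerProductSpace ℝ E]
    {n : ℕ} (ε : ℝ) (hε : 0 < ε)
    (X Y : Fin n → E) (hX : ∀ i, ‖X i‖ ≤ 1) (hY : ∀ i, ‖Y i‖ ≤ 1)
    (hm : ∀ m k : Fin n, m < k → ε ≤ ⟪X m, Y k⟫ - ⟪X k, Y m⟫) :
    Real.log n ≤ π / ε + 1 := by
  classical
  rcases Nat.eq_zero_or_pos n with h0 | h0
  · subst h0
    simp only [Nat.cast_zero, Real.log_zero]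
    positivity
  have hT := ipub_hilbert X Y hX hY
  set f : Fin n → Fin n → ℝ := fun m k =>
    ⟪X m, Y k⟫ * (if m = k then 0 else 2*π/((k:ℝ) - (m:ℝ))) with hf_def
  set T : ℝ := ∑ m : Fin n, ∑ k : Fin n, f m k with hT_def
  set S1 : ℝ := ∑ k : Fin n, ∑ m : Fin n,
    (if (m:ℕ) < (k:ℕ) then 2*π*ε/((k:ℝ) - (m:ℝ)) else 0) with hS1_def
  -- key termwise claim
  have hclaim : ∀ m k : Fin n, (m:ℕ) < (k:ℕ) →
      2*π*ε/((k:ℝ) - (m:ℝ)) ≤ f m k + f k m := by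
    intro m k hmk
    have hd : (0:ℝ) < (k:ℝ) - (m:ℝ) := by
      have : (m:ℝ) < (k:ℝ) := by exact_mod_cast hmk
      linarith
    have hne : m ≠ k := by
      intro h; subst h; exact lt_irrefl _ hmk
    have hne' : k ≠ m := fun h => hne h.symm
    have hmarg := hm m k (by exact hmk)
    have hfm : f m k = ⟪X m, Y k⟫ * (2*π/((k:ℝ) - (m:ℝ))) := by
      simp only [hf_def, if_neg hne]
    have hfk : f k m = -(⟪X k, Y m⟫ * (2*π/((k:ℝ) - (m:ℝ)))) := by
      simp only [hf_def, if_neg hne']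
      rw [show (m:ℝ) - (k:ℝ) = -((k:ℝ) - (m:ℝ)) by ring, div_neg]
      ring
    rw [hfm, hfk]
    have hpos : 0 < 2*π/((k:ℝ) - (m:ℝ)) := by positivity
    have := mul_le_mul_of_nonneg_right hmarg hpos.le
    calc 2*π*ε/((k:ℝ) - (m:ℝ)) = ε * (2*π/((k:ℝ) - (m:ℝ))) := by
          ring
      _ ≤ (⟪X m, Y k⟫ - ⟪X k, Y m⟫) * (2*π/((k:ℝ) - (m:ℝ))) := this
      _ = ⟪X m, Y k⟫ * (2*π/((k:ℝ) - (m:ℝ)))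
          + -(⟪X k, Y m⟫ * (2*π/((k:ℝ) - (m:ℝ)))) := by ring
  -- doubling
  have hdouble : S1 + S1 ≤ T + T := by
    have hTswap : T = ∑ m : Fin n, ∑ k : Fin n, f k m := by
      rw [hT_def]; exact Finset.sum_comm
    have hsum : T + T = ∑ m : Fin n, ∑ k : Fin n, (f m k + f k m) := by
      nth_rewrite 2 [hTswap]
      nth_rewrite 1 [hT_def]
      rw [← Finset.sum_add_distrib]
      apply Finset.sum_congr rfl; intro m _
      rw [← Finset.sum_add_distrib]
    have hS1a : S1 = ∑ m : Fin n, ∑ k : Fin n,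
        (if (m:ℕ) < (k:ℕ) then 2*π*ε/((k:ℝ) - (m:ℝ)) else 0) := by
      rw [hS1_def]; exact Finset.sum_comm
    have hS1b : S1 = ∑ m : Fin n, ∑ k : Fin n,
        (if (k:ℕ) < (m:ℕ) then 2*π*ε/((m:ℝ) - (k:ℝ)) else 0) := rfl
    rw [hsum]
    nth_rewrite 2 [hS1b]
    nth_rewrite 1 [hS1a]
    rw [← Finset.sum_add_distrib]
    apply Finset.sum_le_sum
    intro m _
    rw [← Finset.sum_add_distrib]
    apply Finset.sum_le_sum
    intro k _
    rcases lt_trichotomy ((m:ℕ)) ((k:ℕ)) with h | h | h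
    · rw [if_pos h, if_neg (by omega)]
      rw [add_zero]
      exact hclaim m k h
    · have : m = k := Fin.ext h
      subst this
      rw [if_neg (show ¬((m:ℕ) < (m:ℕ)) by omega)]
      simp [hf_def]
    · rw [if_neg (by omega), if_pos h, zero_add, add_comm (f m k)]
      exact hclaim k m h
  -- harmonic lower bound for S1
  have hharm : 2*π*ε * ((n:ℝ) * Real.log n - n) ≤ S1 := by
    have hinner : ∀ k : Fin n, Real.log ((k:ℕ)+1) ≤
        ∑ m : Fin n, (if (m:ℕ) < (k:ℕ) then 1/((k:ℝ) - (m:ℝ)) else 0) := by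
      intro k
      set K : ℕ := (k:ℕ) with hK_def
      have hrange : ∑ m : Fin n, (if (m:ℕ) < K then 1/((K:ℝ) - (m:ℕ)) else 0)
          = ∑ i ∈ Finset.range n, (if i < K then 1/((K:ℝ) - i) else 0) :=
        Fin.sum_univ_eq_sum_range (fun i => if i < K then 1/((K:ℝ) - i) else 0) n
      have hsub : ∑ i ∈ Finset.range n, (if i < K then 1/((K:ℝ) - i) else 0)
          = ∑ i ∈ Finset.range K, 1/((K:ℝ) - i) := by
        rw [← Finset.sum_subset (Finset.range_subset_range.mpr (le_of_lt k.isLt))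
          (fun i _ hi => by rw [if_neg (by simpa using hi)])]
        apply Finset.sum_congr rfl
        intro i hi
        rw [if_pos (Finset.mem_range.mp hi)]
      have hreflect : ∑ i ∈ Finset.range K, 1/((K:ℝ) - i)
          = ∑ j ∈ Finset.range K, 1/((j:ℝ) + 1) := by
        rw [← Finset.sum_range_reflect (fun i => 1/((K:ℝ) - i)) K]
        apply Finset.sum_congr rfl
        intro j hj
        have hjK : j < K := Finset.mem_range.mp hj
        congr 1
        have h1 : K - 1 - j = K - (1 + j) := by omega
        rw [h1, Nat.cast_sub (by omega)]
        push_cast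
        ring
      calc Real.log ((K:ℝ)+1) ≤ ∑ j ∈ Finset.range K, 1/((j:ℝ) + 1) := by
            have := ipub_log_le_harm K
            push_cast at this ⊢
            exact this
        _ = ∑ i ∈ Finset.range K, 1/((K:ℝ) - i) := hreflect.symm
        _ = ∑ i ∈ Finset.range n, (if i < K then 1/((K:ℝ) - i) else 0) := hsub.symm
        _ = ∑ m : Fin n, (if (m:ℕ) < K then 1/((K:ℝ) - (m:ℕ)) else 0) := hrange.symm
    have hfactor : ∀ k : Fin n,
        ∑ m : Fin n, (if (m:ℕ) < (k:ℕ) then 2*π*ε/((k:ℝ) - (m:ℝ)) else 0)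
        = 2*π*ε * ∑ m : Fin n, (if (m:ℕ) < (k:ℕ) then 1/((k:ℝ) - (m:ℝ)) else 0) := by
      intro k
      rw [Finset.mul_sum]
      apply Finset.sum_congr rfl
      intro m _
      by_cases h : (m:ℕ) < (k:ℕ)
      · rw [if_pos h, if_pos h, mul_one_div]
      · rw [if_neg h, if_neg h, mul_zero]
    have hlog : ∑ k : Fin n, Real.log ((k:ℕ)+1) ≥ (n:ℝ) * Real.log n - n := by
      have h1 : ∑ k : Fin n, Real.log ((k:ℕ)+1)
          = ∑ j ∈ Finset.range n, Real.log ((j:ℝ)+1) :=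
        Fin.sum_univ_eq_sum_range (fun j => Real.log ((j:ℝ)+1)) n
      rw [h1]
      have := ipub_sum_log n
      push_cast at this ⊢
      exact this
    have h2 : 2*π*ε * ((n:ℝ) * Real.log n - n) ≤ 2*π*ε * ∑ k : Fin n, Real.log ((k:ℕ)+1) :=
      mul_le_mul_of_nonneg_left hlog (by positivity)
    calc 2*π*ε * ((n:ℝ) * Real.log n - n) ≤ 2*π*ε * ∑ k : Fin n, Real.log ((k:ℕ)+1) := h2
      _ ≤ 2*π*ε * ∑ k : Fin n, ∑ m : Fin n,
            (if (m:ℕ) < (k:ℕ) then 1/((k:ℝ) - (m:ℝ)) else 0) := by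
          apply mul_le_mul_of_nonneg_left _ (by positivity)
          exact Finset.sum_le_sum (fun k _ => hinner k)
      _ = S1 := by
          rw [Finset.mul_sum]
          show _ = ∑ k : Fin n, ∑ m : Fin n,
            (if (m:ℕ) < (k:ℕ) then 2*π*ε/((k:ℝ) - (m:ℝ)) else 0)
          apply Finset.sum_congr rfl
          intro k _
          exact (hfactor k).symm
  -- conclusion
  have hS1T : S1 ≤ 2*π^2*n := by
    have : T ≤ 2*π^2*n := hT
    linarith [hdouble]
  have hchain : 2*π*ε * ((n:ℝ) * Real.log n - n) ≤ 2*π^2*(n:ℝ) := le_trans hharm hS1T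
  have h2pi : (0:ℝ) < 2*π := by positivity
  have hnpos : (0:ℝ) < n := by exact_mod_cast h0
  have key3 : ε*((n:ℝ)*Real.log n - n) ≤ π*(n:ℝ) := by
    have h' : 2*π*(ε*((n:ℝ)*Real.log n - n)) ≤ 2*π*(π*(n:ℝ)) := by
      nlinarith [hchain]
    exact (mul_le_mul_iff_of_pos_left h2pi).mp h'
  have key4 : ε*(Real.log n - 1) ≤ π := by
    have h' : (ε*(Real.log n - 1)) * n ≤ π * n := by nlinarith [key3]
    exact (mul_le_mul_iff_of_pos_right hnpos).mp h'
  have : Real.log n - 1 ≤ π/ε := (le_div_iff₀ hε).mpr (by linarith [key4])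
  linarith

open Matrix in
/-- Upper bound for integer power connectives `⟪x,y⟫^d`. -/
theorem integer_power_upper_bound
    {H : Type*} [NormedAddCommGroup H] [InnerProductSpace ℝ H]
    (d : ℕ) (hd : 1 ≤ d)
    (ε : ℝ) (hε : ε ∈ Set.Ioo (0 : ℝ) 1) (n : ℕ)
    (x y : Fin n → H)
    (hx : ∀ i, ‖x i‖ ≤ 1) (hy : ∀ i, ‖y i‖ ≤ 1)
    (hhg : ∀ i j : Fin n, i < j → ε ≤ ⟪x i, y j⟫ ^ d - ⟪x j, y i⟫ ^ d) :
    Real.log n ≤ π / ε + 1 := by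
  classical
  set z : (Fin n ⊕ Fin n) → H := Sum.elim x y with hz_def
  set Gm : Matrix (Fin n ⊕ Fin n) (Fin n ⊕ Fin n) ℝ :=
    Matrix.of (fun a b => ⟪z a, z b⟫) with hGm_def
  have hpsd : Gm.PosSemidef := by
    rw [Matrix.posSemidef_iff_dotProduct_mulVec]
    constructor
    · ext a b
      simp only [Matrix.conjTranspose_apply, Matrix.of_apply, hGm_def, star_trivial]
      exact real_inner_comm _ _
    · intro c
      have hcalc : c ⬝ᵥ Gm.mulVec c
          = ⟪∑ a, c a • z a, ∑ b, c b • z b⟫ := by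
        simp only [dotProduct, Matrix.mulVec, Matrix.of_apply, hGm_def,
          sum_inner, inner_sum, real_inner_smul_left, real_inner_smul_right]
        apply Finset.sum_congr rfl
        intro a _
        rw [Finset.mul_sum]
        apply Finset.sum_congr rfl
        intro b _
        rw [real_inner_comm (z a) (z b)]
        ring
      simp only [star_trivial]
      rw [hcalc]
      exact real_inner_self_nonneg
  obtain ⟨B, hB⟩ : ∃ B : Matrix (Fin n ⊕ Fin n) (Fin n ⊕ Fin n) ℝ, Gm = Bᴴ * B := by
    open scoped MatrixOrder in
    obtain ⟨B, hB⟩ := CStarAlgebra.nonneg_iff_eq_star_mul_self.mp hpsd.nonneg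
    exact ⟨B, hB⟩
  have hBG : ∀ a b, (∑ j, B j a * B j b) = ⟪z a, z b⟫ := by
    intro a b
    have h1 : Gm a b = (Bᴴ * B) a b := by rw [← hB]
    simp only [Matrix.mul_apply, Matrix.conjTranspose_apply, star_trivial,
      Matrix.of_apply, hGm_def] at h1
    exact h1.symm
  set W : (Fin n ⊕ Fin n) → EuclideanSpace ℝ (Fin d → (Fin n ⊕ Fin n)) :=
    fun a => WithLp.toLp 2 (fun k => ∏ t, B (k t) a) with hW_def
  have hWinner : ∀ a b, ⟪W a, W b⟫ = ⟪z a, z b⟫ ^ d := by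
    intro a b
    have h1 : ⟪W a, W b⟫ = ∑ k : Fin d → (Fin n ⊕ Fin n),
        (∏ t, B (k t) a) * (∏ t, B (k t) b) := by
      simp only [hW_def, PiLp.inner_apply, PiLp.toLp_apply, RCLike.inner_apply, starRingEnd_apply, star_trivial, mul_comm]
    rw [h1]
    have h2 : ∀ k : Fin d → (Fin n ⊕ Fin n),
        (∏ t, B (k t) a) * (∏ t, B (k t) b) = ∏ t, (B (k t) a * B (k t) b) :=
      fun k => (Finset.prod_mul_distrib).symm
    rw [Finset.sum_congr rfl (fun k _ => h2 k)]
    rw [← hBG a b]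
    rw [← Fintype.piFinset_univ, ← Finset.prod_univ_sum (fun _ => Finset.univ)
      (fun (_ : Fin d) (j : Fin n ⊕ Fin n) => B j a * B j b)]
    rw [Finset.prod_const, Finset.card_univ, Fintype.card_fin]
  set X : Fin n → EuclideanSpace ℝ (Fin d → (Fin n ⊕ Fin n)) := fun i => W (Sum.inl i)
  set Y : Fin n → EuclideanSpace ℝ (Fin d → (Fin n ⊕ Fin n)) := fun j => W (Sum.inr j)
  have hXnorm : ∀ i, ‖X i‖ ≤ 1 := by
    intro i
    have h1 : ⟪X i, X i⟫ = ⟪x i, x i⟫ ^ d := by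
      have := hWinner (Sum.inl i) (Sum.inl i)
      simpa [hz_def] using this
    have h2 : ‖X i‖^2 ≤ 1 := by
      rw [← real_inner_self_eq_norm_sq, h1, real_inner_self_eq_norm_sq]
      exact pow_le_one₀ (by positivity) (pow_le_one₀ (norm_nonneg _) (hx i))
    nlinarith [norm_nonneg (X i)]
  have hYnorm : ∀ i, ‖Y i‖ ≤ 1 := by
    intro i
    have h1 : ⟪Y i, Y i⟫ = ⟪y i, y i⟫ ^ d := by
      have := hWinner (Sum.inr i) (Sum.inr i)
      simpa [hz_def] using this
    have h2 : ‖Y i‖^2 ≤ 1 := by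
      rw [← real_inner_self_eq_norm_sq, h1, real_inner_self_eq_norm_sq]
      exact pow_le_one₀ (by positivity) (pow_le_one₀ (norm_nonneg _) (hy i))
    nlinarith [norm_nonneg (Y i)]
  have hmarg : ∀ m k : Fin n, m < k → ε ≤ ⟪X m, Y k⟫ - ⟪X k, Y m⟫ := by
    intro m k hmk
    have h1 : ⟪X m, Y k⟫ = ⟪x m, y k⟫ ^ d := by
      have := hWinner (Sum.inl m) (Sum.inr k)
      simpa [hz_def] using this
    have h2 : ⟪X k, Y m⟫ = ⟪x k, y m⟫ ^ d := by
      have := hWinner (Sum.inl k) (Sum.inr m)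
      simpa [hz_def] using this
    rw [h1, h2]
    exact hhg m k hmk
  exact ipub_main ε hε.1 X Y hXnorm hYnorm hmarg
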